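/- For every m, n ∈ ℕ and every I ∈ 𝕊, the function g : ℝ² → ℍ defined by g(x,y) = e^{−(x²+y²)}·(x+Iy)^m is smooth and satisfies the Rodrigues-type formula (−1)^n · e^{x²+y²} · ((∂_I)^n g)(x,y) = H^Q_{m,n}(x+Iy, x−Iy) for all (x,y) ∈ ℝ², where ∂_I h := (1/2)(∂h/∂x − I·(∂h/∂y)) with I multiplying on the left. -/

import Mathlib

open scoped Quaternion
open MeasureTheory

noncomputable section

/-- The slice derivative `∂_I h = (1/2)(∂h/∂x − I·∂h/∂y)` for `h : ℝ² → ℍ`,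
with `I` multiplying on the left. -/
def dop (I : ℍ[ℝ]) (g : ℝ × ℝ → ℍ[ℝ]) : ℝ × ℝ → ℍ[ℝ] :=
  fun p => (1/2 : ℝ) • (fderiv ℝ g p (1, 0) - I * fderiv ℝ g p (0, 1))

/-- The quaternionic Hermite polynomial
`H^Q_{m,n}(q,q̄) = m!n! ∑_{j=0}^{min(m,n)} ((−1)^j/j!) q^{m−j} q̄^{n−j}/((m−j)!(n−j)!)`,
as a function of the two (commuting) arguments `q` and `q̄`. -/
def HQ (m n : ℕ) (q qb : ℍ[ℝ]) : ℍ[ℝ] :=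
  ((m.factorial : ℝ) * (n.factorial : ℝ)) •
    ∑ j ∈ Finset.range (min m n + 1),
      ((-1 : ℝ) ^ j / ((j.factorial : ℝ) * ((m - j).factorial : ℝ) * ((n - j).factorial : ℝ))) •
        (q ^ (m - j) * qb ^ (n - j))

namespace Stmt3Aux

open Complex

def Qf : ℝ × ℝ → ℂ := fun p => (p.1 : ℂ) + Complex.I * p.2
def Qb : ℝ × ℝ → ℂ := fun p => (p.1 : ℂ) - Complex.I * p.2
def Ef : ℝ × ℝ → ℝ := fun p => Real.exp (-(p.1*p.1+p.2*p.2))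
def Mc (a b : ℕ) : ℝ × ℝ → ℂ := fun p => (Ef p : ℂ) * Qf p ^ a * Qb p ^ b

def dopC (g : ℝ × ℝ → ℂ) : ℝ × ℝ → ℂ :=
  fun p => (1/2 : ℝ) • (fderiv ℝ g p (1, 0) - Complex.I * fderiv ℝ g p (0, 1))

def cc (m n j : ℕ) : ℝ := (-1)^(n+j) * ((m.choose j * n.descFactorial j : ℕ) : ℝ)
def Sc (m n : ℕ) : ℝ × ℝ → ℂ := fun p => ∑ j ∈ Finset.range (n+1), cc m n j • Mc (m-j) (n-j) p

lemma contDiff_ofReal : ContDiff ℝ (⊤:ℕ∞) (fun x : ℝ => (x:ℂ)) := Complex.ofRealCLM.contDiff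

lemma contDiff_Mc (a b : ℕ) : ContDiff ℝ (⊤:ℕ∞) (Mc a b) := by
  have hE : ContDiff ℝ (⊤:ℕ∞) (fun p : ℝ × ℝ => ((Ef p : ℝ) : ℂ)) :=
    contDiff_ofReal.comp (Real.contDiff_exp.comp
      ((contDiff_fst.mul contDiff_fst).add (contDiff_snd.mul contDiff_snd)).neg)
  have hQ : ContDiff ℝ (⊤:ℕ∞) Qf :=
    (contDiff_ofReal.comp contDiff_fst).add (contDiff_const.mul (contDiff_ofReal.comp contDiff_snd))
  have hQb : ContDiff ℝ (⊤:ℕ∞) Qb :=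
    (contDiff_ofReal.comp contDiff_fst).sub (contDiff_const.mul (contDiff_ofReal.comp contDiff_snd))
  exact (hE.mul (hQ.pow a)).mul (hQb.pow b)

lemma diff_Mc (a b : ℕ) (p : ℝ × ℝ) : DifferentiableAt ℝ (Mc a b) p :=
  ((contDiff_Mc a b).differentiable (by simp)).differentiableAt

def LQ : ℝ × ℝ →L[ℝ] ℂ := Complex.ofRealCLM.comp (ContinuousLinearMap.fst ℝ ℝ ℝ) +
  Complex.I • Complex.ofRealCLM.comp (ContinuousLinearMap.snd ℝ ℝ ℝ)
def LQb : ℝ × ℝ →L[ℝ] ℂ := Complex.ofRealCLM.comp (ContinuousLinearMap.fst ℝ ℝ ℝ) -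
  Complex.I • Complex.ofRealCLM.comp (ContinuousLinearMap.snd ℝ ℝ ℝ)

lemma hQf (p : ℝ × ℝ) : HasFDerivAt Qf LQ p := by
  have h1 := Complex.ofRealCLM.hasFDerivAt.comp p (hasFDerivAt_fst (p := p))
  have h2 := Complex.ofRealCLM.hasFDerivAt.comp p (hasFDerivAt_snd (p := p))
  have := h1.add (h2.const_mul Complex.I)
  exact this

lemma hQbf (p : ℝ × ℝ) : HasFDerivAt Qb LQb p := by
  have h1 := Complex.ofRealCLM.hasFDerivAt.comp p (hasFDerivAt_fst (p := p))
  have h2 := Complex.ofRealCLM.hasFDerivAt.comp p (hasFDerivAt_snd (p := p))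
  have := h1.sub (h2.const_mul Complex.I)
  exact this

lemma hQfpow (a : ℕ) (p : ℝ × ℝ) :
    HasFDerivAt (fun p => Qf p ^ a) (((a:ℂ) * Qf p ^ (a-1)) • LQ) p := by
  exact (hasDerivAt_pow a (Qf p)).comp_hasFDerivAt p (hQf p)

lemma hQbpow (b : ℕ) (p : ℝ × ℝ) :
    HasFDerivAt (fun p => Qb p ^ b) (((b:ℂ) * Qb p ^ (b-1)) • LQb) p := by
  exact (hasDerivAt_pow b (Qb p)).comp_hasFDerivAt p (hQbf p)

def LR (p : ℝ × ℝ) : ℝ × ℝ →L[ℝ] ℝ :=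
  -((p.1 • ContinuousLinearMap.fst ℝ ℝ ℝ + p.1 • ContinuousLinearMap.fst ℝ ℝ ℝ) +
    (p.2 • ContinuousLinearMap.snd ℝ ℝ ℝ + p.2 • ContinuousLinearMap.snd ℝ ℝ ℝ))

lemma hEfC (p : ℝ × ℝ) :
    HasFDerivAt (fun p => (Ef p : ℂ)) (Complex.ofRealCLM.comp (Ef p • LR p)) p := by
  have hr : HasFDerivAt (fun p : ℝ × ℝ => -(p.1*p.1+p.2*p.2)) (LR p) p := by
    exact (((hasFDerivAt_fst (p := p)).mul (hasFDerivAt_fst (p := p))).add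
      ((hasFDerivAt_snd (p := p)).mul (hasFDerivAt_snd (p := p)))).neg
  have he := (Real.hasDerivAt_exp (-(p.1*p.1+p.2*p.2))).comp_hasFDerivAt p hr
  have hc := Complex.ofRealCLM.hasFDerivAt.comp p he
  exact hc

lemma dopC_Mc (a b : ℕ) (p : ℝ × ℝ) :
    dopC (Mc a b) p = (a : ℂ) * Mc (a-1) b p - Mc a (b+1) p := by
  have h : HasFDerivAt (Mc a b) _ p := ((hEfC p).mul (hQfpow a p)).mul (hQbpow b p)
  rw [dopC, h.fderiv]
  simp only [ContinuousLinearMap.add_apply, ContinuousLinearMap.smul_apply,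
    ContinuousLinearMap.comp_apply, ContinuousLinearMap.coe_fst', ContinuousLinearMap.coe_snd',
    ContinuousLinearMap.neg_apply, ContinuousLinearMap.sub_apply, LQ, LQb, LR,
    Complex.ofRealCLM_apply, Complex.real_smul, smul_eq_mul]
  simp only [Mc, Qf, Qb, Ef]
  push_cast
  ring_nf
  simp only [Complex.I_sq]
  ring

lemma natkey (m n k : ℕ) :
    m.choose (k+1) * ((n+1).descFactorial (k+1)) =
      (m - k) * (m.choose k * n.descFactorial k) + m.choose (k+1) * n.descFactorial (k+1) := by
  rw [Nat.succ_descFactorial_succ, Nat.descFactorial_succ]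
  rcases le_or_gt k n with h | h
  · have h1 : m.choose (k+1) * (k+1) = m.choose k * (m - k) := Nat.choose_succ_right_eq m k
    have h2 : n + 1 = (k+1) + (n-k) := by omega
    calc m.choose (k+1) * ((n+1) * n.descFactorial k)
        = (m.choose (k+1) * (k+1)) * n.descFactorial k
            + m.choose (k+1) * ((n-k) * n.descFactorial k) := by rw [h2]; ring
      _ = _ := by rw [h1]; ring
  · have hz : n.descFactorial k = 0 := Nat.descFactorial_eq_zero_iff_lt.mpr h
    simp [hz]

lemma cc_zero (m n : ℕ) : cc m (n+1) 0 = -cc m n 0 := by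
  simp [cc, pow_succ]

lemma cc_succ (m n k : ℕ) :
    cc m (n+1) (k+1) = ((m - k : ℕ) : ℝ) * cc m n k - cc m n (k+1) := by
  have h := natkey m n k
  have h' : ((m.choose (k+1) * ((n+1).descFactorial (k+1)) : ℕ) : ℝ)
      = ((m-k : ℕ) : ℝ) * ((m.choose k * n.descFactorial k : ℕ) : ℝ)
        + ((m.choose (k+1) * n.descFactorial (k+1) : ℕ) : ℝ) := by
    exact_mod_cast congrArg (fun t : ℕ => (t:ℝ)) h
  simp only [cc]
  rw [show n+1+(k+1) = (n+k)+2 by ring, pow_add]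
  rw [show n+(k+1) = (n+k)+1 by ring, pow_add]
  rw [h']
  ring

lemma cc_top (m n : ℕ) : cc m n (n+1) = 0 := by
  simp [cc, Nat.descFactorial_eq_zero_iff_lt.mpr (Nat.lt_succ_self n)]

lemma contDiff_Sc (m n : ℕ) : ContDiff ℝ (⊤:ℕ∞) (Sc m n) :=
  ContDiff.sum fun j _ => (contDiff_Mc _ _).const_smul _

lemma diff_Sc (m n : ℕ) : Differentiable ℝ (Sc m n) :=
  (contDiff_Sc m n).differentiable (by simp)

lemma dopC_sum {ι : Type*} (s : Finset ι) (c : ι → ℝ) (f : ι → ℝ × ℝ → ℂ) (p : ℝ × ℝ)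
    (hf : ∀ i ∈ s, DifferentiableAt ℝ (f i) p) :
    dopC (fun q => ∑ i ∈ s, c i • f i q) p = ∑ i ∈ s, c i • dopC (f i) p := by
  unfold dopC
  have hD : ∀ i ∈ s, DifferentiableAt ℝ (fun q => c i • f i q) p :=
    fun i hi => (hf i hi).const_smul (c i)
  rw [fderiv_fun_sum hD]
  have he : ∀ i ∈ s, fderiv ℝ (fun q => c i • f i q) p = c i • fderiv ℝ (f i) p :=
    fun i hi => fderiv_const_smul (hf i hi) (c i)
  rw [Finset.sum_congr rfl he]
  simp only [ContinuousLinearMap.coe_sum', Finset.sum_apply, ContinuousLinearMap.coe_smul',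
    Pi.smul_apply]
  rw [Finset.mul_sum, ← Finset.sum_sub_distrib, Finset.smul_sum]
  refine Finset.sum_congr rfl fun i _ => ?_
  rw [smul_sub, smul_comm, mul_smul_comm, smul_sub]
  module

lemma Sc_step (m n : ℕ) (p : ℝ × ℝ) : dopC (Sc m n) p = Sc m (n+1) p := by
  have h1 : dopC (Sc m n) p
      = ∑ j ∈ Finset.range (n+1), cc m n j • dopC (Mc (m-j) (n-j)) p := by
    rw [show Sc m n = fun q => ∑ j ∈ Finset.range (n+1), cc m n j • Mc (m-j) (n-j) q from rfl]
    exact dopC_sum _ _ _ p (fun i _ => diff_Mc _ _ p)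
  rw [h1]
  simp_rw [dopC_Mc]
  set T : ℕ → ℂ := fun j => Mc (m-j) (n+1-j) p with hT
  have hL : ∑ j ∈ Finset.range (n+1),
        cc m n j • ((↑(m-j) : ℂ) * Mc (m-j-1) (n-j) p - Mc (m-j) (n-j+1) p)
      = (∑ j ∈ Finset.range (n+1), (((m-j : ℕ) : ℝ) * cc m n j) • T (j+1))
        - ∑ j ∈ Finset.range (n+1), cc m n j • T j := by
    rw [← Finset.sum_sub_distrib]
    refine Finset.sum_congr rfl fun j hj => ?_
    have e1 : Mc (m-j-1) (n-j) p = T (j+1) := by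
      rw [hT]; rw [show m-j-1 = m-(j+1) from by omega, show n-j = n+1-(j+1) from by omega]
    have e2 : Mc (m-j) (n-j+1) p = T j := by
      have hj' : j ≤ n := Nat.lt_succ_iff.mp (Finset.mem_range.mp hj)
      rw [hT]; rw [show n-j+1 = n+1-j from by omega]
    rw [smul_sub, e1, e2]
    congr 1
    rw [show ((m-j : ℕ) : ℂ) = (((m-j:ℕ) : ℝ) : ℂ) by push_cast; ring, ← Complex.real_smul,
      smul_smul, mul_comm (cc m n j)]
  rw [hL]
  have hR : Sc m (n+1) p = (∑ j ∈ Finset.range (n+1), cc m (n+1) (j+1) • T (j+1))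
      + cc m (n+1) 0 • T 0 := by
    rw [Sc, Finset.sum_range_succ' (fun j => cc m (n+1) j • Mc (m-j) (n+1-j) p) (n+1)]
  rw [hR]
  simp_rw [cc_succ, sub_smul, cc_zero, Finset.sum_sub_distrib]
  have h2 : ∑ j ∈ Finset.range (n+1), cc m n (j+1) • T (j+1)
      = (∑ j ∈ Finset.range (n+2), cc m n j • T j) - cc m n 0 • T 0 := by
    rw [Finset.sum_range_succ' (fun j => cc m n j • T j) (n+1)]
    ring
  have h3 : ∑ j ∈ Finset.range (n+2), cc m n j • T j
      = ∑ j ∈ Finset.range (n+1), cc m n j • T j := by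
    rw [Finset.sum_range_succ, cc_top]
    simp
  rw [h2, h3]
  simp only [neg_smul]
  abel

variable (I : ℍ[ℝ]) (hI : I * I = -1)

def iota : ℂ →ₐ[ℝ] ℍ[ℝ] := Complex.liftAux I hI
def J : ℂ →L[ℝ] ℍ[ℝ] := LinearMap.toContinuousLinearMap (iota I hI).toLinearMap

lemma J_apply (z : ℂ) : J I hI z = iota I hI z := rfl

lemma iota_I : iota I hI Complex.I = I := Complex.liftAux_apply_I I hI

lemma iota_real (r : ℝ) : iota I hI ((r : ℝ) : ℂ) = (r : ℍ[ℝ]) := by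
  rw [show ((r:ℝ):ℂ) = algebraMap ℝ ℂ r from rfl, AlgHom.commutes]
  exact congrFun QuaternionAlgebra.coe_algebraMap r

lemma dop_comp (h : ℝ × ℝ → ℂ) (hd : Differentiable ℝ h) (p : ℝ × ℝ) :
    dop I (fun q => iota I hI (h q)) p = iota I hI (dopC h p) := by
  have hf : fderiv ℝ (fun q => iota I hI (h q)) p = (J I hI).comp (fderiv ℝ h p) :=
    (((J I hI).hasFDerivAt.comp p (hd p).hasFDerivAt)).fderiv
  rw [dop, dopC, hf]
  simp only [ContinuousLinearMap.comp_apply, J_apply]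
  rw [_root_.map_smul, map_sub, map_mul, iota_I]

lemma iter_dop (m n : ℕ) :
    (dop I)^[n] (fun q => iota I hI (Mc m 0 q)) = fun q => iota I hI (Sc m n q) := by
  induction n with
  | zero =>
    simp only [Function.iterate_zero, id_eq]
    funext q
    congr 1
    simp [Sc, cc, Mc]
  | succ n ih =>
    rw [Function.iterate_succ_apply', ih]
    funext q
    rw [dop_comp I hI (Sc m n) (diff_Sc m n) q, Sc_step]

lemma key_coeff (m n j : ℕ) (hjm : j ≤ m) (hjn : j ≤ n) :
    (-1:ℝ)^n * cc m n j =
      ((m.factorial : ℝ) * (n.factorial : ℝ)) *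
        ((-1 : ℝ)^j / ((j.factorial : ℝ) * ((m-j).factorial : ℝ) * ((n-j).factorial : ℝ))) := by
  have hnat : (m.choose j * n.descFactorial j) * (j.factorial * (m-j).factorial * (n-j).factorial)
      = m.factorial * n.factorial := by
    have h1 : m.choose j * j.factorial * (m-j).factorial = m.factorial :=
      Nat.choose_mul_factorial_mul_factorial hjm
    have h2 : (n-j).factorial * n.descFactorial j = n.factorial :=
      Nat.factorial_mul_descFactorial hjn
    calc (m.choose j * n.descFactorial j) * (j.factorial * (m-j).factorial * (n-j).factorial)
        = (m.choose j * j.factorial * (m-j).factorial)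
            * ((n-j).factorial * n.descFactorial j) := by ring
      _ = m.factorial * n.factorial := by rw [h1, h2]
  have hnat' : ((m.choose j * n.descFactorial j : ℕ) : ℝ)
      * ((j.factorial : ℝ) * ((m-j).factorial : ℝ) * ((n-j).factorial : ℝ))
      = (m.factorial : ℝ) * (n.factorial : ℝ) := by exact_mod_cast hnat
  have hpos : (j.factorial : ℝ) * ((m-j).factorial : ℝ) * ((n-j).factorial : ℝ) ≠ 0 := by
    positivity
  push_cast at hnat'
  have hsq : ((-1:ℝ)^n)^2 = 1 := by
    rw [← pow_mul, mul_comm, pow_mul]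
    norm_num
  rw [cc]
  push_cast
  field_simp
  linear_combination ((-1:ℝ)^n)^2 * (-1:ℝ)^j * hnat'
    + (-1:ℝ)^j * ((m.factorial:ℝ) * (n.factorial:ℝ)) * hsq

lemma final_sum (m n : ℕ) (p : ℝ × ℝ) :
    ((-1:ℝ)^n * Real.exp (p.1^2+p.2^2)) • Sc m n p
      = ((m.factorial : ℝ) * (n.factorial : ℝ)) •
          ∑ j ∈ Finset.range (min m n + 1),
            ((-1 : ℝ)^j / ((j.factorial : ℝ) * ((m-j).factorial : ℝ) * ((n-j).factorial : ℝ))) •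
              (Qf p ^ (m-j) * Qb p ^ (n-j)) := by
  have hE : Real.exp (p.1^2+p.2^2) * Ef p = 1 := by
    rw [Ef, ← Real.exp_add, show p.1^2+p.2^2 + -(p.1*p.1+p.2*p.2) = 0 by ring, Real.exp_zero]
  have hL : ((-1:ℝ)^n * Real.exp (p.1^2+p.2^2)) • Sc m n p
      = ∑ j ∈ Finset.range (n+1), ((-1:ℝ)^n * cc m n j) • (Qf p ^ (m-j) * Qb p ^ (n-j)) := by
    rw [Sc, Finset.smul_sum]
    refine Finset.sum_congr rfl fun j _ => ?_
    rw [Mc, show (Ef p : ℂ) * Qf p ^ (m-j) * Qb p ^ (n-j)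
      = Ef p • (Qf p ^ (m-j) * Qb p ^ (n-j)) by rw [Complex.real_smul]; ring]
    rw [smul_smul, smul_smul]
    congr 1
    linear_combination ((-1:ℝ)^n * cc m n j) * hE
  rw [hL]
  have hsub : Finset.range (min m n + 1) ⊆ Finset.range (n+1) :=
    Finset.range_subset_range.mpr (by omega)
  rw [← Finset.sum_subset hsub (fun j hj hj' => ?_)]
  · rw [Finset.smul_sum]
    refine Finset.sum_congr rfl fun j hj => ?_
    have hj' : j ≤ min m n := Nat.lt_succ_iff.mp (Finset.mem_range.mp hj)
    rw [smul_smul, key_coeff m n j (by omega) (by omega)]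
  · have hjn : j ≤ n := Nat.lt_succ_iff.mp (Finset.mem_range.mp hj)
    have hjm : m < j := by
      simp only [Finset.mem_range] at hj'
      omega
    have hc0 : m.choose j = 0 := Nat.choose_eq_zero_of_lt hjm
    simp [cc, hc0]

lemma iota_Qf (q : ℝ × ℝ) : iota I hI (Qf q) = (q.1 : ℍ[ℝ]) + I * (q.2 : ℍ[ℝ]) := by
  rw [Qf, map_add, map_mul, iota_I, iota_real, iota_real]

lemma iota_Qb (q : ℝ × ℝ) : iota I hI (Qb q) = (q.1 : ℍ[ℝ]) - I * (q.2 : ℍ[ℝ]) := by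
  rw [Qb, map_sub, map_mul, iota_I, iota_real, iota_real]

lemma g_eq (m : ℕ) :
    (fun p : ℝ × ℝ => ((Real.exp (-(p.1 ^ 2 + p.2 ^ 2)) : ℝ) : ℍ[ℝ]) *
        ((p.1 : ℍ[ℝ]) + I * (p.2 : ℍ[ℝ])) ^ m)
      = fun q => iota I hI (Mc m 0 q) := by
  funext q
  have hq : -(q.1*q.1+q.2*q.2) = -(q.1^2+q.2^2) := by ring
  simp only [Mc, Ef, hq, pow_zero, mul_one, map_mul, map_pow, iota_real, iota_Qf]

end Stmt3Aux

/-- Rodrigues-type formula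
`(−1)^n e^{x²+y²} (∂_I)^n (e^{−(x²+y²)}(x+Iy)^m) = H^Q_{m,n}(x+Iy, x−Iy)`. -/
theorem stmt3 (m n : ℕ) (I : ℍ[ℝ]) (hI : I * I = -1) :
    ContDiff ℝ (⊤ : ℕ∞)
        (fun p : ℝ × ℝ =>
          ((Real.exp (-(p.1 ^ 2 + p.2 ^ 2)) : ℝ) : ℍ[ℝ]) *
            ((p.1 : ℍ[ℝ]) + I * (p.2 : ℍ[ℝ])) ^ m) ∧
      ∀ x y : ℝ,
        ((-1 : ℝ) ^ n * Real.exp (x ^ 2 + y ^ 2)) •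
            (dop I)^[n]
              (fun p : ℝ × ℝ =>
                ((Real.exp (-(p.1 ^ 2 + p.2 ^ 2)) : ℝ) : ℍ[ℝ]) *
                  ((p.1 : ℍ[ℝ]) + I * (p.2 : ℍ[ℝ])) ^ m) (x, y) =
          HQ m n ((x : ℍ[ℝ]) + I * (y : ℍ[ℝ])) ((x : ℍ[ℝ]) - I * (y : ℍ[ℝ])) := by
  classical
  rw [Stmt3Aux.g_eq I hI m]
  constructor
  · exact (Stmt3Aux.J I hI).contDiff.comp (Stmt3Aux.contDiff_Mc m 0)
  · intro x y
    simp only [Stmt3Aux.iter_dop I hI m n]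
    rw [← _root_.map_smul, Stmt3Aux.final_sum m n (x, y), HQ]
    rw [_root_.map_smul, map_sum]
    congr 1
    refine Finset.sum_congr rfl fun j _ => ?_
    rw [_root_.map_smul, map_mul, map_pow, map_pow, Stmt3Aux.iota_Qf, Stmt3Aux.iota_Qb]
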